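/- Let c ≠ 0 be a real constant, z_b : ℝ → ℝ differentiable, and let h, u, w, σ, p_b : ℝ → ℝ → ℝ be continuously differentiable functions of (x,t). Assume that at every point (x,t) the mass equation ∂_t h + ∂_x(h·u) = 0 and the bottom-pressure evolution equation ∂_t(h·p_b) + ∂_x(h·u·p_b) − 6·c²·u·∂_x z_b = −6·c²·(w − σ/2) hold. Then at every point (x,t): p_b·(u·∂_x z_b − w + σ/2) = (1/(6·c²))·( ∂_t(h·p_b²/2) + ∂_x(h·u·p_b²/2) ). -/

import Mathlib

/-- Partial derivative with respect to the first (space) argument. -/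
noncomputable def pdx (f : ℝ → ℝ → ℝ) (x t : ℝ) : ℝ := deriv (fun x' => f x' t) x

/-- Partial derivative with respect to the second (time) argument. -/
noncomputable def pdt (f : ℝ → ℝ → ℝ) (x t : ℝ) : ℝ := deriv (fun t' => f x t') t

theorem stmt_5 (c : ℝ) (hc : c ≠ 0) (zb : ℝ → ℝ) (hzb : Differentiable ℝ zb)
    (h u w sg pb : ℝ → ℝ → ℝ)
    (hh : ContDiff ℝ 1 (fun p : ℝ × ℝ => h p.1 p.2))
    (hu : ContDiff ℝ 1 (fun p : ℝ × ℝ => u p.1 p.2))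
    (hw : ContDiff ℝ 1 (fun p : ℝ × ℝ => w p.1 p.2))
    (hsg : ContDiff ℝ 1 (fun p : ℝ × ℝ => sg p.1 p.2))
    (hpb : ContDiff ℝ 1 (fun p : ℝ × ℝ => pb p.1 p.2))
    (mass : ∀ x t : ℝ, pdt h x t + pdx (fun x t => h x t * u x t) x t = 0)
    (pbEvol : ∀ x t : ℝ,
      pdt (fun x t => h x t * pb x t) x t
        + pdx (fun x t => h x t * u x t * pb x t) x t
        - 6 * c ^ 2 * u x t * deriv zb x
      = -(6 * c ^ 2) * (w x t - sg x t / 2)) :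
    ∀ x t : ℝ,
      pb x t * (u x t * deriv zb x - w x t + sg x t / 2)
      = (1 / (6 * c ^ 2)) *
          (pdt (fun x t => h x t * (pb x t) ^ 2 / 2) x t
            + pdx (fun x t => h x t * u x t * (pb x t) ^ 2 / 2) x t) := by
  intro x t
  have hdh := hh.differentiable one_ne_zero
  have hdu := hu.differentiable one_ne_zero
  have hdpb := hpb.differentiable one_ne_zero
  have dline : DifferentiableAt ℝ (fun x' : ℝ => (x', t)) x :=
    differentiableAt_id.prodMk (differentiableAt_const t)
  have dlinet : DifferentiableAt ℝ (fun t' : ℝ => (x, t')) t :=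
    (differentiableAt_const x).prodMk differentiableAt_id
  have dxh : DifferentiableAt ℝ (fun x' => h x' t) x := DifferentiableAt.comp (g := fun p : ℝ × ℝ => h p.1 p.2) x (hdh (x, t)) dline
  have dxu : DifferentiableAt ℝ (fun x' => u x' t) x := DifferentiableAt.comp (g := fun p : ℝ × ℝ => u p.1 p.2) x (hdu (x, t)) dline
  have dxpb : DifferentiableAt ℝ (fun x' => pb x' t) x := DifferentiableAt.comp (g := fun p : ℝ × ℝ => pb p.1 p.2) x (hdpb (x, t)) dline
  have dth : DifferentiableAt ℝ (fun t' => h x t') t := (hdh (x, t)).comp t dlinet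
  have dtpb : DifferentiableAt ℝ (fun t' => pb x t') t := (hdpb (x, t)).comp t dlinet
  have Hxh : HasDerivAt (fun x' => h x' t) (pdx h x t) x := dxh.hasDerivAt
  have Hxu : HasDerivAt (fun x' => u x' t) (pdx u x t) x := dxu.hasDerivAt
  have Hxpb : HasDerivAt (fun x' => pb x' t) (pdx pb x t) x := dxpb.hasDerivAt
  have Hth : HasDerivAt (fun t' => h x t') (pdt h x t) t := dth.hasDerivAt
  have Htpb : HasDerivAt (fun t' => pb x t') (pdt pb x t) t := dtpb.hasDerivAt
  have Htpb2 : HasDerivAt (fun t' => pb x t' ^ 2)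
      (pdt pb x t * pb x t + pb x t * pdt pb x t) t := by
    simpa [pow_two, Pi.mul_def] using Htpb.mul Htpb
  have Hxpb2 : HasDerivAt (fun x' => pb x' t ^ 2)
      (pdx pb x t * pb x t + pb x t * pdx pb x t) x := by
    simpa [pow_two, Pi.mul_def] using Hxpb.mul Hxpb
  have m := mass x t
  have pe := pbEvol x t
  have e1 : pdx (fun x t => h x t * u x t) x t
      = pdx h x t * u x t + h x t * pdx u x t := (Hxh.mul Hxu).deriv
  have e2 : pdt (fun x t => h x t * pb x t) x t
      = pdt h x t * pb x t + h x t * pdt pb x t := (Hth.mul Htpb).deriv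
  have e3 : pdx (fun x t => h x t * u x t * pb x t) x t
      = (pdx h x t * u x t + h x t * pdx u x t) * pb x t
        + h x t * u x t * pdx pb x t := ((Hxh.mul Hxu).mul Hxpb).deriv
  have e4 : pdt (fun x t => h x t * pb x t ^ 2 / 2) x t
      = (pdt h x t * pb x t ^ 2
          + h x t * (pdt pb x t * pb x t + pb x t * pdt pb x t)) / 2 :=
    ((Hth.mul Htpb2).div_const 2).deriv
  have e5 : pdx (fun x t => h x t * u x t * pb x t ^ 2 / 2) x t
      = ((pdx h x t * u x t + h x t * pdx u x t) * pb x t ^ 2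
          + h x t * u x t * (pdx pb x t * pb x t + pb x t * pdx pb x t)) / 2 :=
    (((Hxh.mul Hxu).mul Hxpb2).div_const 2).deriv
  rw [e1] at m
  rw [e2, e3] at pe
  rw [e4, e5]
  have h6 : (6 : ℝ) * c ^ 2 ≠ 0 := by positivity
  rw [eq_comm, one_div, inv_mul_eq_div, div_eq_iff h6]
  linear_combination (pb x t) * pe - (pb x t ^ 2 / 2) * m
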